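/- Let S : (0, ∞) → End(V) be a differentiable path of self-adjoint operators on a finite-dimensional real inner product space V, satisfying S' + S² + R = 0 where R(t) is self-adjoint with trace R(t) ≥ 0 for all t. If S is defined for all t ∈ ℝ (i.e., extends to a solution on all of ℝ), then S ≡ 0 and R ≡ 0. -/

import Mathlib

open Real Set

private lemma no_neg_start (n : ℝ) (hn : 0 < n) (f f' : ℝ → ℝ)
    (hd : ∀ t, HasDerivAt f (f' t) t) (hle : ∀ t, f' t ≤ -(f t)^2 / n)
    (a : ℝ) (ha : f a < 0) : False := by
  have hanti : Antitone f := by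
    apply antitone_of_deriv_nonpos (fun t => (hd t).differentiableAt)
    intro t
    rw [(hd t).deriv]
    calc f' t ≤ -(f t)^2 / n := hle t
    _ ≤ 0 := by
      rw [neg_div]
      exact neg_nonpos.mpr (by positivity)
  have hneg : ∀ t, a ≤ t → f t < 0 := fun t ht => lt_of_le_of_lt (hanti ht) ha
  set h : ℝ → ℝ := fun t => (f t)⁻¹ with hh
  have hha : h a < 0 := inv_neg''.mpr ha
  set T : ℝ := a + n * (1 - h a) with hT
  have haT : a < T := by nlinarith
  have hdh : ∀ t ∈ Icc a T, HasDerivAt h (-(f' t) / (f t)^2) t := fun t ht =>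
    (hd t).inv (ne_of_lt (hneg t ht.1))
  -- g := h - t/n is monotone on Icc a T
  set g : ℝ → ℝ := fun t => h t - t / n with hg
  have hmono : MonotoneOn g (Icc a T) := by
    apply monotoneOn_of_deriv_nonneg (convex_Icc a T)
    · intro t ht
      exact ((hdh t ht).sub ((hasDerivAt_id t).div_const n)).continuousAt.continuousWithinAt
    · intro t ht
      rw [interior_Icc] at ht
      exact ((hdh t (Ioo_subset_Icc_self ht)).sub
        ((hasDerivAt_id t).div_const n)).differentiableAt.differentiableWithinAt
    · intro t ht
      rw [interior_Icc] at ht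
      have ht' := Ioo_subset_Icc_self ht
      have hgd : HasDerivAt g (-(f' t) / (f t)^2 - 1/n) t :=
        (hdh t ht').sub ((hasDerivAt_id t).div_const n)
      rw [hgd.deriv]
      have hft : f t < 0 := hneg t ht'.1
      have hft' : f t ≠ 0 := ne_of_lt hft
      have hf2 : (0:ℝ) < (f t)^2 := by positivity
      have h1 : f' t * n ≤ -(f t)^2 := by
        have h2 := mul_le_mul_of_nonneg_right (hle t) hn.le
        rwa [div_mul_cancel₀ _ (ne_of_gt hn)] at h2
      have key : 1 / n ≤ -(f' t) / (f t)^2 := by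
        rw [div_le_div_iff₀ hn hf2]
        nlinarith
      linarith
  have hgle := hmono (left_mem_Icc.mpr haT.le) (right_mem_Icc.mpr haT.le) haT.le
  have hhT : h T < 0 := inv_neg''.mpr (hneg T (le_of_lt haT))
  simp only [hg] at hgle
  have : h a - a / n ≤ h T - (a + n * (1 - h a)) / n := by rw [← hT]; exact hgle
  have hexp : (a + n * (1 - h a)) / n = a / n + (1 - h a) := by
    field_simp
  rw [hexp] at this
  linarith

private lemma scalar_zero (n : ℝ) (hn : 0 < n) (f f' : ℝ → ℝ)
    (hd : ∀ t, HasDerivAt f (f' t) t) (hle : ∀ t, f' t ≤ -(f t)^2 / n) :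
    ∀ t, f t = 0 := by
  intro a
  rcases lt_trichotomy (f a) 0 with h | h | h
  · exact absurd (no_neg_start n hn f f' hd hle a h) (by simp)
  · exact h
  · exfalso
    have hd2 : ∀ t, HasDerivAt (fun t => -f (-t)) (f' (-t)) t := by
      intro t
      have h1 : HasDerivAt (fun t => f (-t)) (f' (-t) * (-1)) t :=
        (hd (-t)).comp t (hasDerivAt_neg t)
      have h2 := h1.neg
      simp only [mul_neg, mul_one, neg_neg] at h2
      exact h2
    have hle2 : ∀ t, f' (-t) ≤ -(-f (-t))^2 / n := by
      intro t
      have := hle (-t)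
      simp only [neg_sq]
      linarith
    exact no_neg_start n hn (fun t => -f (-t)) (fun t => f' (-t)) hd2 hle2 (-a)
      (by simpa using h)

open RealInnerProductSpace

private lemma trace_eq_sum_inner' {V : Type*} [NormedAddCommGroup V] [InnerProductSpace ℝ V]
    [FiniteDimensional ℝ V] {n : ℕ} (b : OrthonormalBasis (Fin n) ℝ V) (f : V →ₗ[ℝ] V) :
    LinearMap.trace ℝ V f = ∑ i, ⟪b i, f (b i)⟫ := by
  rw [LinearMap.trace_eq_matrix_trace ℝ b.toBasis, Matrix.trace]
  simp [Matrix.diag, LinearMap.toMatrix_apply, OrthonormalBasis.coe_toBasis,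
    OrthonormalBasis.coe_toBasis_repr_apply, OrthonormalBasis.repr_apply_apply]

set_option maxHeartbeats 800000

theorem stmt_10 (V : Type*) [NormedAddCommGroup V] [InnerProductSpace ℝ V]
    [FiniteDimensional ℝ V] [CompleteSpace V]
    (S S' R : ℝ → V →L[ℝ] V)
    (hS : ∀ t : ℝ, HasDerivAt S (S' t) t)
    (hsa : ∀ t : ℝ, IsSelfAdjoint (S t))
    (hRsa : ∀ t : ℝ, IsSelfAdjoint (R t))
    (htrR : ∀ t : ℝ, (0 : ℝ) ≤ LinearMap.trace ℝ V (R t : V →ₗ[ℝ] V))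
    (hric : ∀ t : ℝ, S' t + S t ∘L S t + R t = 0) :
    ∀ t : ℝ, S t = 0 ∧ R t = 0 := by
  set n := Module.finrank ℝ V with hn
  rcases Nat.eq_zero_or_pos n with hn0 | hnpos
  · -- trivial case: V is zero-dimensional
    have : Subsingleton V := Module.finrank_zero_iff.mp hn0
    intro t
    constructor <;> (ext x; exact Subsingleton.elim _ _)
  · set b : OrthonormalBasis (Fin n) ℝ V := stdOrthonormalBasis ℝ V with hb
    set tr : (V →L[ℝ] V) →L[ℝ] ℝ :=
      LinearMap.toContinuousLinearMap
        ((LinearMap.trace ℝ V) ∘ₗ (ContinuousLinearMap.coeLM ℝ)) with htrdef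
    have htr : ∀ A : V →L[ℝ] V, tr A = LinearMap.trace ℝ V (A : V →ₗ[ℝ] V) := fun A => rfl
    -- trace of a square of a self-adjoint operator
    have hsq : ∀ A : V →L[ℝ] V, IsSelfAdjoint A →
        LinearMap.trace ℝ V ((A ∘L A : V →L[ℝ] V) : V →ₗ[ℝ] V) = ∑ i, ‖A (b i)‖ ^ 2 := by
      intro A hA
      rw [trace_eq_sum_inner' b]
      refine Finset.sum_congr rfl fun i _ => ?_
      have h1 : ⟪b i, A (A (b i))⟫ = ⟪A (b i), A (b i)⟫ := (hA.isSymmetric _ _).symm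
      simpa [real_inner_self_eq_norm_sq] using h1
    have hsqnn : ∀ A : V →L[ℝ] V, IsSelfAdjoint A →
        (0:ℝ) ≤ LinearMap.trace ℝ V ((A ∘L A : V →L[ℝ] V) : V →ₗ[ℝ] V) := by
      intro A hA
      rw [hsq A hA]
      positivity
    -- Cauchy–Schwarz for the trace
    have hCS : ∀ A : V →L[ℝ] V, IsSelfAdjoint A →
        (LinearMap.trace ℝ V (A : V →ₗ[ℝ] V)) ^ 2 ≤
          (n : ℝ) * LinearMap.trace ℝ V ((A ∘L A : V →L[ℝ] V) : V →ₗ[ℝ] V) := by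
      intro A hA
      rw [hsq A hA, trace_eq_sum_inner' b]
      have hc : (∑ i, ⟪b i, A (b i)⟫) ^ 2 ≤ (n : ℝ) * ∑ i, ⟪b i, A (b i)⟫ ^ 2 := by
        have h0 := sq_sum_le_card_mul_sum_sq (s := (Finset.univ : Finset (Fin n)))
          (f := fun i => ⟪b i, A (b i)⟫)
        simpa using h0
      have hterm : ∑ i, ⟪b i, A (b i)⟫ ^ 2 ≤ ∑ i, ‖A (b i)‖ ^ 2 := by
        apply Finset.sum_le_sum
        intro i _
        have h2 := real_inner_mul_inner_self_le (b i) (A (b i))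
        have hb1 : ‖b i‖ = 1 := b.orthonormal.1 i
        rw [real_inner_self_eq_norm_sq, real_inner_self_eq_norm_sq, hb1] at h2
        nlinarith [h2]
      calc (∑ i, ⟪b i, A (b i)⟫) ^ 2 ≤ (n : ℝ) * ∑ i, ⟪b i, A (b i)⟫ ^ 2 := hc
        _ ≤ (n : ℝ) * ∑ i, ‖A (b i)‖ ^ 2 :=
            mul_le_mul_of_nonneg_left hterm (by positivity)
    set f : ℝ → ℝ := fun t => tr (S t) with hf
    have hfd : ∀ t, HasDerivAt f (tr (S' t)) t := fun t =>
      tr.hasFDerivAt.comp_hasDerivAt t (hS t)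
    have htr_eq : ∀ t, tr (S' t) + LinearMap.trace ℝ V ((S t ∘L S t : V →L[ℝ] V) : V →ₗ[ℝ] V)
        + LinearMap.trace ℝ V (R t : V →ₗ[ℝ] V) = 0 := by
      intro t
      have := congrArg (fun A : V →L[ℝ] V => LinearMap.trace ℝ V (A : V →ₗ[ℝ] V)) (hric t)
      simpa [htr] using this
    have hle : ∀ t, tr (S' t) ≤ -(f t) ^ 2 / n := by
      intro t
      have h1 := hCS (S t) (hsa t)
      have h2 := htrR t
      have h3 := htr_eq t
      have hfe : f t = LinearMap.trace ℝ V ((S t : V →ₗ[ℝ] V)) := htr (S t)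
      have hnr : (0:ℝ) < (n:ℝ) := by exact_mod_cast hnpos
      rw [le_div_iff₀ hnr, hfe]
      nlinarith [h1, h2, h3]
    have hzero : ∀ t, f t = 0 :=
      scalar_zero n (by exact_mod_cast hnpos) f (fun t => tr (S' t)) hfd hle
    have hfconst : f = fun _ => (0:ℝ) := funext hzero
    have hf'zero : ∀ t, tr (S' t) = 0 := by
      intro t
      have h1 := hfd t
      rw [hfconst] at h1
      exact h1.unique (hasDerivAt_const t 0)
    have hSzero : ∀ t, S t = 0 := by
      intro t
      have h3 := htr_eq t
      rw [hf'zero t] at h3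
      have h4 := hsqnn (S t) (hsa t)
      have h5 := htrR t
      have h6 : LinearMap.trace ℝ V ((S t ∘L S t : V →L[ℝ] V) : V →ₗ[ℝ] V) = 0 := by linarith
      rw [hsq (S t) (hsa t)] at h6
      have h7 : ∀ i, S t (b i) = 0 := by
        intro i
        have := (Finset.sum_eq_zero_iff_of_nonneg (fun i _ => by positivity)).mp h6 i
          (Finset.mem_univ i)
        have h8 : ‖S t (b i)‖ = 0 := by nlinarith [norm_nonneg (S t (b i)), this]
        exact norm_eq_zero.mp h8
      apply ContinuousLinearMap.coe_injective
      exact b.toBasis.ext fun i => by simpa using h7 i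
    intro t
    refine ⟨hSzero t, ?_⟩
    have hSconst : S = fun _ => (0 : V →L[ℝ] V) := funext hSzero
    have hS'zero : S' t = 0 := by
      have h1 := hS t
      rw [hSconst] at h1
      exact h1.unique (hasDerivAt_const t 0)
    have := hric t
    rw [hS'zero, hSzero t] at this
    simpa using this
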